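/- Let D ⊆ ℂ be open and connected, let z_τ, z_μ : D → ℂ be holomorphic functions which are not identically equal, and let φ_τ, φ*_μ : D → ℋ be continuous functions satisfying N_v φ_τ(v) = z_τ(v) φ_τ(v) and N_v* φ*_μ(v) = conj(z_μ(v)) φ*_μ(v) for all v ∈ D. Then ⟨φ*_μ(v), φ_τ(v)⟩ = 0 for every v ∈ D. -/

import Mathlib

open ContinuousLinearMap
open scoped InnerProductSpace

/-- if `z_τ, z_μ` are holomorphic on an open connected `D` and not
identically equal, and `φ_τ(v)`, `φ*_μ(v)` are continuous eigenvector families for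
`N_v = N₀ + vW` at `z_τ(v)` and for `N_v*` at `conj (z_μ(v))` respectively, then
`⟪φ*_μ(v), φ_τ(v)⟫ = 0` on `D`. -/
theorem eigenpaths_of_distinct_eigenvalues_orthogonal
    {H : Type*} [NormedAddCommGroup H] [InnerProductSpace ℂ H] [CompleteSpace H]
    (N₀ W : H →L[ℂ] H) (D : Set ℂ) (hD : IsOpen D) (hDconn : IsConnected D)
    (zτ zμ : ℂ → ℂ) (hzτ : DifferentiableOn ℂ zτ D) (hzμ : DifferentiableOn ℂ zμ D)
    (hne : ¬ Set.EqOn zτ zμ D)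
    (φτ φμs : ℂ → H) (hφτ : ContinuousOn φτ D) (hφμs : ContinuousOn φμs D)
    (heigτ : ∀ v ∈ D, (N₀ + v • W) (φτ v) = zτ v • φτ v)
    (heigμ : ∀ v ∈ D, adjoint (N₀ + v • W) (φμs v) = (starRingEnd ℂ) (zμ v) • φμs v) :
    ∀ v ∈ D, ⟪φμs v, φτ v⟫_ℂ = 0 := by
  set g : ℂ → ℂ := fun v => ⟪φμs v, φτ v⟫_ℂ with hg
  have hgcont : ContinuousOn g D := ContinuousOn.inner hφμs hφτ
  -- pointwise key identity
  have key : ∀ v ∈ D, (zτ v - zμ v) * g v = 0 := by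
    intro v hv
    have h1 : ⟪φμs v, (N₀ + v • W) (φτ v)⟫_ℂ = zτ v * g v := by
      rw [heigτ v hv, inner_smul_right]
    have h2 : ⟪φμs v, (N₀ + v • W) (φτ v)⟫_ℂ = zμ v * g v := by
      rw [← adjoint_inner_left, heigμ v hv, inner_smul_left]
      simp
      exact Or.inl rfl
    have h3 : zτ v * g v = zμ v * g v := h1.symm.trans h2
    linear_combination h3
  -- zeros of zτ - zμ do not accumulate
  have hana : AnalyticOnNhd ℂ (fun z => zτ z - zμ z) D :=
    (hzτ.sub hzμ).analyticOnNhd hD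
  intro v hv
  have hnotall : ¬ Set.EqOn (fun z => zτ z - zμ z) 0 D := by
    intro h
    exact hne fun x hx => by have := h hx; simpa [sub_eq_zero] using this
  have hfreq : ¬ (∃ᶠ z in nhdsWithin v {v}ᶜ, zτ z - zμ z = 0) := by
    intro h
    exact hnotall (hana.eqOn_zero_of_preconnected_of_frequently_eq_zero
      hDconn.isPreconnected hv h)
  have hev : ∀ᶠ z in nhdsWithin v {v}ᶜ, zτ z - zμ z ≠ 0 := by
    simpa [Filter.not_frequently] using hfreq
  -- on the punctured filter within D, g = 0
  have hevD : ∀ᶠ z in nhdsWithin v {v}ᶜ, z ∈ D :=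
    Filter.Eventually.filter_mono nhdsWithin_le_nhds (hD.eventually_mem hv)
  have hev0 : ∀ᶠ z in nhdsWithin v {v}ᶜ, g z = 0 := by
    filter_upwards [hev, hevD] with z h1 h2
    have := key z h2
    rcases mul_eq_zero.mp this with h | h
    · exact absurd h h1
    · exact h
  -- g is continuous at v within D; punctured nbhd within D is nontrivial
  have hne' : (nhdsWithin v (D \ {v})).NeBot := by
    have heq : D \ {v} = D ∩ {v}ᶜ := rfl
    rw [heq, nhdsWithin_inter_of_mem (mem_nhdsWithin_of_mem_nhds (hD.mem_nhds hv))]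
    exact inferInstance
  have hle : nhdsWithin v (D \ {v}) ≤ nhdsWithin v {v}ᶜ :=
    nhdsWithin_mono v (fun x hx => hx.2)
  have hleD : nhdsWithin v (D \ {v}) ≤ nhdsWithin v D :=
    nhdsWithin_mono v (fun x hx => hx.1)
  have htend : Filter.Tendsto g (nhdsWithin v (D \ {v})) (nhds (g v)) :=
    (hgcont v hv).mono_left hleD
  have hEE : g =ᶠ[nhdsWithin v (D \ {v})] (fun _ => (0:ℂ)) := hev0.filter_mono hle
  have htend0 : Filter.Tendsto g (nhdsWithin v (D \ {v})) (nhds 0) :=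
    Filter.Tendsto.congr' hEE.symm tendsto_const_nhds
  exact tendsto_nhds_unique htend htend0
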